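/- Let P_1,…,P_s ∈ ℤ[x_1,…,x_r] (s ≥ 2, r ≥ 2) be nonzero coprime polynomials, and suppose P_i(0,…,0) ≠ 0 for at least one i ∈ {1,…,s}. Then the polynomials P_1(t·a),…,P_s(t·a), obtained by substituting x_j := t·a_j, are coprime in ℚ[a_1,…,a_r, t]. Consequently there is a nonzero polynomial G ∈ ℚ[a_1,…,a_r] such that for every a* ∈ ℤ^r with G(a*) ≠ 0, the one-variable polynomials P_1(t·a*),…,P_s(t·a*) are coprime in ℚ[t]. -/

import Mathlib

open MvPolynomial

/-- Substitution `x_j ↦ t·a_j`, from `ℤ[x_1,…,x_r]` to `ℚ[a_1,…,a_r,t]`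
(the variable `Sum.inl j` is `a_j` and `Sum.inr ()` is `t`). -/
noncomputable def subRay (r : ℕ) :
    MvPolynomial (Fin r) ℤ →+* MvPolynomial (Fin r ⊕ Unit) ℚ :=
  eval₂Hom (Int.castRingHom (MvPolynomial (Fin r ⊕ Unit) ℚ))
    fun j => X (Sum.inr ()) * X (Sum.inl j)

/-- Substitution `x_j ↦ t·a*_j` for a fixed `a* ∈ ℤ^r`, from `ℤ[x_1,…,x_r]`
to `ℚ[t]`. -/
noncomputable def subRayAt (r : ℕ) (a : Fin r → ℤ) :
    MvPolynomial (Fin r) ℤ →+* Polynomial ℚ :=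
  eval₂Hom (Int.castRingHom (Polynomial ℚ))
    fun j => Polynomial.C ((a j : ℚ)) * Polynomial.X

/-! ### Auxiliary ring homomorphisms -/

/-- `a_j ↦ x_j`, `t ↦ l`. -/
noncomputable def eLam (r : ℕ) (l : ℚ) :
    MvPolynomial (Fin r ⊕ Unit) ℚ →+* MvPolynomial (Fin r) ℚ :=
  eval₂Hom C (Sum.elim (fun j => X j) (fun _ => C l))

/-- `x_j ↦ l·x_j` on integer polynomials. -/
noncomputable def fLam (r : ℕ) (l : ℚ) :
    MvPolynomial (Fin r) ℤ →+* MvPolynomial (Fin r) ℚ :=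
  eval₂Hom ((C : ℚ →+* MvPolynomial (Fin r) ℚ).comp (Int.castRingHom ℚ))
    (fun j => C l * X j)

/-- `x_j ↦ l·x_j` on rational polynomials. -/
noncomputable def gLam (r : ℕ) (l : ℚ) :
    MvPolynomial (Fin r) ℚ →+* MvPolynomial (Fin r) ℚ :=
  eval₂Hom C (fun j => C l * X j)

/-- `a_j ↦ x_j`, `t ↦ T` (coefficientwise polynomial). -/
noncomputable def kap (r : ℕ) :
    MvPolynomial (Fin r ⊕ Unit) ℚ →+* MvPolynomial (Fin r) (Polynomial ℚ) :=
  eval₂Hom ((C : Polynomial ℚ →+* MvPolynomial (Fin r) (Polynomial ℚ)).comp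
      (Polynomial.C : ℚ →+* Polynomial ℚ))
    (Sum.elim (fun j => X j) (fun _ => C Polynomial.X))

/-- Inverse of `kap`. -/
noncomputable def kapInv (r : ℕ) :
    MvPolynomial (Fin r) (Polynomial ℚ) →+* MvPolynomial (Fin r ⊕ Unit) ℚ :=
  eval₂Hom (Polynomial.eval₂RingHom (C : ℚ →+* MvPolynomial (Fin r ⊕ Unit) ℚ)
      (X (Sum.inr ())))
    (fun j => X (Sum.inl j))

/-- Evaluate the `a`-variables at `0`, keeping `t`. -/
noncomputable def rho (r : ℕ) :
    MvPolynomial (Fin r) (Polynomial ℚ) →+* Polynomial ℚ :=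
  eval (fun _ => (0 : Polynomial ℚ))

/-- `a_j ↦ 0`, `t ↦ T`. -/
noncomputable def eps (r : ℕ) :
    MvPolynomial (Fin r ⊕ Unit) ℚ →+* Polynomial ℚ :=
  (rho r).comp (kap r)

/-- View `ℚ[a,t]` as polynomials in `t` over `ℚ[a]`. -/
noncomputable def psi (r : ℕ) :
    MvPolynomial (Fin r ⊕ Unit) ℚ →+* Polynomial (MvPolynomial (Fin r) ℚ) :=
  eval₂Hom ((Polynomial.C : MvPolynomial (Fin r) ℚ →+* Polynomial (MvPolynomial (Fin r) ℚ)).comp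
      (C : ℚ →+* MvPolynomial (Fin r) ℚ))
    (Sum.elim (fun j => Polynomial.C (X j)) (fun _ => Polynomial.X))

/-- Inverse of `psi`. -/
noncomputable def psiInv (r : ℕ) :
    Polynomial (MvPolynomial (Fin r) ℚ) →+* MvPolynomial (Fin r ⊕ Unit) ℚ :=
  Polynomial.eval₂RingHom
    (eval₂Hom (C : ℚ →+* MvPolynomial (Fin r ⊕ Unit) ℚ) (fun j => X (Sum.inl j)))
    (X (Sum.inr ()))

/-- Evaluate the coefficients at `a`. -/
noncomputable def eva (r : ℕ) (a : Fin r → ℤ) :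
    Polynomial (MvPolynomial (Fin r) ℚ) →+* Polynomial ℚ :=
  Polynomial.mapRingHom (eval (fun j => ((a j : ℚ))))

/-- The fraction field of `ℚ[a_1,…,a_r]`. -/
abbrev Kfrac (r : ℕ) := FractionRing (MvPolynomial (Fin r) ℚ)

/-- Coefficientwise inclusion of `ℚ[a][t]` into `Kfrac[t]`. -/
noncomputable def theta (r : ℕ) :
    Polynomial (MvPolynomial (Fin r) ℚ) →+* Polynomial (Kfrac r) :=
  Polynomial.mapRingHom (algebraMap (MvPolynomial (Fin r) ℚ) (Kfrac r))

/-! ### Composition identities -/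

lemma comp1 (r : ℕ) (l : ℚ) : (eLam r l).comp (subRay r) = fLam r l := by
  apply MvPolynomial.ringHom_ext
  · intro n
    simp [subRay, fLam, eLam, map_intCast]
  · intro j
    simp [subRay, fLam, eLam, mul_comm]

lemma comp2 (r : ℕ) (l : ℚ) (hl : l ≠ 0) :
    (gLam r l⁻¹).comp (fLam r l) = (MvPolynomial.map (Int.castRingHom ℚ) :
      MvPolynomial (Fin r) ℤ →+* MvPolynomial (Fin r) ℚ) := by
  apply MvPolynomial.ringHom_ext
  · intro n
    simp [gLam, fLam]
  · intro j
    simp [gLam, fLam, ← mul_assoc, ← C_mul, mul_inv_cancel₀ hl]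

lemma comp3 (r : ℕ) (l : ℚ) (hl : l ≠ 0) :
    (gLam r l).comp (gLam r l⁻¹) = RingHom.id _ := by
  apply MvPolynomial.ringHom_ext
  · intro q
    simp [gLam]
  · intro j
    simp [gLam, ← mul_assoc, ← C_mul, inv_mul_cancel₀ hl]

lemma comp4 (r : ℕ) : (kapInv r).comp (kap r) = RingHom.id _ := by
  apply MvPolynomial.ringHom_ext
  · intro q
    simp [kap, kapInv]
  · rintro (j | ⟨⟩) <;> simp [kap, kapInv]

lemma comp_kap_eval (r : ℕ) (l : ℚ) :
    (MvPolynomial.map (Polynomial.evalRingHom l)).comp (kap r) = eLam r l := by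
  apply MvPolynomial.ringHom_ext
  · intro q
    simp [kap, eLam]
  · rintro (j | ⟨⟩) <;> simp [kap, eLam]

lemma comp5 (r : ℕ) :
    (eps r).comp (subRay r) =
      ((Polynomial.C : ℚ →+* Polynomial ℚ).comp (Int.castRingHom ℚ)).comp
        (eval (fun _ => (0 : ℤ))) := by
  apply MvPolynomial.ringHom_ext
  · intro n
    simp [eps, rho, kap, subRay, map_intCast]
  · intro j
    simp [eps, rho, kap, subRay]

lemma comp6 (r : ℕ) : (psiInv r).comp (psi r) = RingHom.id _ := by
  apply MvPolynomial.ringHom_ext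
  · intro q
    simp [psi, psiInv]
  · rintro (j | ⟨⟩) <;> simp [psi, psiInv]

lemma comp7 (r : ℕ) : (psi r).comp (psiInv r) = RingHom.id _ := by
  apply Polynomial.ringHom_ext'
  · apply MvPolynomial.ringHom_ext
    · intro q
      simp [psi, psiInv]
    · intro j
      simp [psi, psiInv]
  · simp [psi, psiInv]

lemma comp8 (r : ℕ) (a : Fin r → ℤ) :
    ((eva r a).comp ((psi r).comp (subRay r))) = subRayAt r a := by
  apply MvPolynomial.ringHom_ext
  · intro n
    simp [eva, psi, subRay, subRayAt, map_intCast]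
  · intro j
    simp only [RingHom.comp_apply]
    simp [eva, psi, subRay, subRayAt]

/-! ### Small helpers -/

lemma eqC_of_totalDegree_eq_zero {σ : Type*} {R : Type*} [CommSemiring R]
    {p : MvPolynomial σ R} (h : p.totalDegree = 0) : p = C (coeff 0 p) := by
  classical
  ext m
  rw [coeff_C]
  split_ifs with hm
  · rw [← hm]
  · by_contra hc
    apply hm
    have hs : m ∈ p.support := by rwa [mem_support_iff]
    have h' := (totalDegree_eq_zero_iff σ p).mp h m hs
    exact Finsupp.ext fun x => by simp [h' x]

/-! ### Part 1 -/

lemma key1 (s r : ℕ) (P : Fin s → MvPolynomial (Fin r) ℤ)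
    (hcop : ∀ D : MvPolynomial (Fin r) ℚ,
      (∀ i, D ∣ (P i).map (Int.castRingHom ℚ)) → D.totalDegree = 0)
    (h0 : ∃ i, eval (fun _ => (0 : ℤ)) (P i) ≠ 0) :
    ∀ D : MvPolynomial (Fin r ⊕ Unit) ℚ,
      (∀ i, D ∣ subRay r (P i)) → D.totalDegree = 0 := by
  obtain ⟨i₀, hi₀⟩ := h0
  intro D hD
  -- Step A: each slice t = l (l ≠ 0) of D is a constant.
  have hA : ∀ l : ℚ, l ≠ 0 → ∃ c : ℚ, eLam r l D = C c := by
    intro l hl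
    have hdvd : ∀ i, gLam r l⁻¹ (eLam r l D) ∣ (P i).map (Int.castRingHom ℚ) := by
      intro i
      have h1 : eLam r l D ∣ eLam r l (subRay r (P i)) := map_dvd _ (hD i)
      rw [show eLam r l (subRay r (P i)) = fLam r l (P i) from
        RingHom.congr_fun (comp1 r l) (P i)] at h1
      have h3 := map_dvd (gLam r l⁻¹) h1
      rwa [show gLam r l⁻¹ (fLam r l (P i)) = (P i).map (Int.castRingHom ℚ) from
        RingHom.congr_fun (comp2 r l hl) (P i)] at h3
    have hC := eqC_of_totalDegree_eq_zero (hcop _ hdvd)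
    refine ⟨coeff 0 (gLam r l⁻¹ (eLam r l D)), ?_⟩
    have h4 := congrArg (gLam r l) hC
    rwa [show (gLam r l) ((gLam r l⁻¹) ((eLam r l) D)) = (eLam r l) D from
        RingHom.congr_fun (comp3 r l hl) _,
      show (gLam r l) (C (coeff 0 (gLam r l⁻¹ (eLam r l D)))) =
        C (coeff 0 (gLam r l⁻¹ (eLam r l D))) from eval₂Hom_C _ _ _] at h4
  -- Step B: D has no `a`-variables.
  have hcoeff : ∀ α : Fin r →₀ ℕ, α ≠ 0 → coeff α (kap r D) = 0 := by
    intro α hα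
    have hroot : ∀ l : ℚ, l ≠ 0 → Polynomial.IsRoot (coeff α (kap r D)) l := by
      intro l hl
      obtain ⟨c, hc⟩ := hA l hl
      have h1 : MvPolynomial.map (Polynomial.evalRingHom l) (kap r D) = eLam r l D :=
        RingHom.congr_fun (comp_kap_eval r l) D
      have h2 : coeff α (MvPolynomial.map (Polynomial.evalRingHom l) (kap r D)) =
          Polynomial.eval l (coeff α (kap r D)) := coeff_map _ _ _
      rw [h1, hc] at h2
      rw [coeff_C, if_neg (fun h => hα (by rw [← h]))] at h2
      exact h2.symm
    by_contra hne
    have hfin := Polynomial.finite_setOf_isRoot hne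
    have hsub : ({(0 : ℚ)}ᶜ : Set ℚ) ⊆ {x | (coeff α (kap r D)).IsRoot x} :=
      fun x hx => hroot x hx
    exact (Set.Finite.infinite_compl (Set.finite_singleton (0 : ℚ))) (hfin.subset hsub)
  have hkapC : kap r D = C (coeff 0 (kap r D)) := by
    classical
    apply MvPolynomial.ext
    intro m
    rw [coeff_C]
    split_ifs with hm
    · rw [← hm]
    · exact hcoeff m (fun h => hm (by rw [h]))
  -- Step C: the remaining one-variable polynomial divides a nonzero constant.
  set q : Polynomial ℚ := coeff 0 (kap r D) with hq
  have hepsD : eps r D = q := by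
    show rho r (kap r D) = q
    rw [hkapC]
    simp [rho]
  have hqdvd : q ∣ Polynomial.C (((eval (fun _ => (0 : ℤ)) (P i₀) : ℤ) : ℚ)) := by
    have h1 := map_dvd (eps r) (hD i₀)
    rw [show eps r (subRay r (P i₀)) =
        Polynomial.C (((eval (fun _ => (0 : ℤ)) (P i₀) : ℤ) : ℚ)) from
      RingHom.congr_fun (comp5 r) (P i₀)] at h1
    rwa [hepsD] at h1
  have hc0 : (((eval (fun _ => (0 : ℤ)) (P i₀) : ℤ) : ℚ)) ≠ 0 := Int.cast_ne_zero.mpr hi₀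
  have hqdeg : q.natDegree = 0 :=
    Nat.le_zero.mp (le_trans
      (Polynomial.natDegree_le_of_dvd hqdvd (fun h => hc0 (by
        have := congrArg (Polynomial.coeff · 0) h
        simpa using this)))
      (le_of_eq (Polynomial.natDegree_C _)))
  obtain ⟨c, hc⟩ : ∃ c : ℚ, q = Polynomial.C c :=
    ⟨q.coeff 0, Polynomial.eq_C_of_natDegree_eq_zero hqdeg⟩
  -- Conclude D is constant.
  have hDkap : kap r D = kap r (C c) := by
    rw [hkapC, hc]
    simp [kap]
  have hinj : Function.Injective (kap r) := by
    intro x y h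
    have h' := congrArg (kapInv r) h
    rwa [show kapInv r (kap r x) = x from RingHom.congr_fun (comp4 r) x,
      show kapInv r (kap r y) = y from RingHom.congr_fun (comp4 r) y] at h'
  rw [hinj hDkap]
  exact totalDegree_C _

set_option maxHeartbeats 2000000 in
set_option synthInstance.maxHeartbeats 1000000 in
theorem stmt15 (s r : ℕ) (hs : 2 ≤ s) (hr : 2 ≤ r)
    (P : Fin s → MvPolynomial (Fin r) ℤ)
    (hP : ∀ i, P i ≠ 0)
    (hcop : ∀ D : MvPolynomial (Fin r) ℚ,
      (∀ i, D ∣ (P i).map (Int.castRingHom ℚ)) → D.totalDegree = 0)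
    (h0 : ∃ i, eval (fun _ => (0 : ℤ)) (P i) ≠ 0) :
    (∀ D : MvPolynomial (Fin r ⊕ Unit) ℚ,
      (∀ i, D ∣ subRay r (P i)) → D.totalDegree = 0) ∧
    ∃ G : MvPolynomial (Fin r) ℚ, G ≠ 0 ∧
      ∀ a : Fin r → ℤ, eval (fun j => (a j : ℚ)) G ≠ 0 →
        ∀ D : Polynomial ℚ, (∀ i, D ∣ subRayAt r a (P i)) → D.natDegree = 0 := by
  classical
  refine ⟨key1 s r P hcop h0, ?_⟩
  letI : NormalizationMonoid (MvPolynomial (Fin r) ℚ) :=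
    UniqueFactorizationMonoid.normalizationMonoid.toNormalizationMonoid
  letI : NormalizedGCDMonoid (MvPolynomial (Fin r) ℚ) :=
    UniqueFactorizationMonoid.toNormalizedGCDMonoid _
  have θC : ∀ x : MvPolynomial (Fin r) ℚ,
      theta r (Polynomial.C x) =
        Polynomial.C ((algebraMap (MvPolynomial (Fin r) ℚ) (Kfrac r)) x) :=
    fun x => Polynomial.map_C _
  -- the `psi r (subRay r (P i))` are nonzero
  have hPmapne : ∀ i, (P i).map (Int.castRingHom ℚ) ≠ 0 := fun i h =>
    hP i (MvPolynomial.map_injective _ Int.cast_injective (by rw [h, map_zero]))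
  have hsubne : ∀ i, subRay r (P i) ≠ 0 := by
    intro i h
    apply hPmapne i
    have h1 : gLam r 1⁻¹ (fLam r 1 (P i)) = (P i).map (Int.castRingHom ℚ) :=
      RingHom.congr_fun (comp2 r 1 one_ne_zero) (P i)
    have h2 : fLam r 1 (P i) = eLam r 1 (subRay r (P i)) :=
      (RingHom.congr_fun (comp1 r 1) (P i)).symm
    rw [← h1, h2, h]
    simp
  have hpsiinj : Function.Injective (psi r) := by
    intro x y h
    have h' := congrArg (psiInv r) h
    rwa [show psiInv r (psi r x) = x from RingHom.congr_fun (comp6 r) x,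
      show psiInv r (psi r y) = y from RingHom.congr_fun (comp6 r) y] at h'
  have hQne : ∀ i, psi r (subRay r (P i)) ≠ 0 := fun i h =>
    hsubne i (hpsiinj (by rw [h, map_zero]))
  have hθinj : Function.Injective (theta r) :=
    Polynomial.map_injective _ (IsFractionRing.injective (MvPolynomial (Fin r) ℚ) (Kfrac r))
  -- the span of the `theta r (psi r (subRay r (P i)))` in `K[t]`
  set I : Ideal (Polynomial (Kfrac r)) :=
    Ideal.span (Set.range fun i => theta r (psi r (subRay r (P i)))) with hI
  haveI hprin : I.IsPrincipal := IsPrincipalIdealRing.principal I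
  obtain ⟨g, hIg⟩ : ∃ g, I = Ideal.span {g} :=
    ⟨_, (Ideal.span_singleton_generator I).symm⟩
  have hgdvd : ∀ i, g ∣ theta r (psi r (subRay r (P i))) := fun i =>
    Ideal.mem_span_singleton.mp (hIg ▸ Ideal.subset_span ⟨i, rfl⟩)
  have hg0 : g ≠ 0 := by
    intro h
    refine hQne ⟨0, lt_of_lt_of_le two_pos hs⟩ (hθinj ?_)
    rw [map_zero]
    have h2 := hgdvd ⟨0, lt_of_lt_of_le two_pos hs⟩
    rw [h] at h2
    exact zero_dvd_iff.mp h2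
  -- integer normalization of the generator
  obtain ⟨b, hb⟩ := IsLocalization.integerNormalization_map_to_map
    (nonZeroDivisors (MvPolynomial (Fin r) ℚ)) g
  set n : Polynomial (MvPolynomial (Fin r) ℚ) :=
    IsLocalization.integerNormalization (nonZeroDivisors (MvPolynomial (Fin r) ℚ)) g with hn
  have hb' : theta r n = Polynomial.C ((algebraMap (MvPolynomial (Fin r) ℚ) (Kfrac r))
      (b : MvPolynomial (Fin r) ℚ)) * g := by
    show Polynomial.map _ _ = _
    rw [hb, Algebra.smul_def, Polynomial.algebraMap_apply]
  have hbK : (algebraMap (MvPolynomial (Fin r) ℚ) (Kfrac r))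
      (b : MvPolynomial (Fin r) ℚ) ≠ 0 := by
    intro h
    exact nonZeroDivisors.coe_ne_zero b
      (IsFractionRing.injective (MvPolynomial (Fin r) ℚ) (Kfrac r) (by simp [h]))
  have hCu : IsUnit (Polynomial.C ((algebraMap (MvPolynomial (Fin r) ℚ) (Kfrac r))
      (b : MvPolynomial (Fin r) ℚ))) :=
    Polynomial.isUnit_C.mpr (isUnit_iff_ne_zero.mpr hbK)
  -- the primitive part of `n` divides every `psi r (subRay r (P i))` over the base ring
  have hmQ : ∀ i, n.primPart ∣ psi r (subRay r (P i)) := by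
    intro i
    have h2 : theta r n ∣ Polynomial.C ((algebraMap (MvPolynomial (Fin r) ℚ) (Kfrac r))
        (b : MvPolynomial (Fin r) ℚ)) * theta r (psi r (subRay r (P i))) := by
      rw [hb']
      exact mul_dvd_mul_left _ (hgdvd i)
    have h3 : theta r n.primPart ∣ theta r (psi r (subRay r (P i))) :=
      (hCu.dvd_mul_left).mp ((map_dvd (theta r) n.primPart_dvd).trans h2)
    have hcne : (psi r (subRay r (P i))).content ≠ 0 := fun h =>
      hQne i (Polynomial.content_eq_zero_iff.mp h)
    have hCcu : IsUnit (Polynomial.C ((algebraMap (MvPolynomial (Fin r) ℚ) (Kfrac r))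
        ((psi r (subRay r (P i))).content))) :=
      Polynomial.isUnit_C.mpr (isUnit_iff_ne_zero.mpr (fun h => hcne
        (IsFractionRing.injective (MvPolynomial (Fin r) ℚ) (Kfrac r) (by simp [h]))))
    have hQi : theta r (psi r (subRay r (P i))) =
        Polynomial.C ((algebraMap (MvPolynomial (Fin r) ℚ) (Kfrac r))
          ((psi r (subRay r (P i))).content)) * theta r (psi r (subRay r (P i))).primPart := by
      conv_lhs => rw [(psi r (subRay r (P i))).eq_C_content_mul_primPart]
      rw [map_mul, θC]
    rw [hQi] at h3
    have h4 : theta r n.primPart ∣ theta r (psi r (subRay r (P i))).primPart :=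
      (hCcu.dvd_mul_left).mp h3
    have h5 : n.primPart ∣ (psi r (subRay r (P i))).primPart :=
      (n.isPrimitive_primPart).dvd_of_fraction_map_dvd_fraction_map
        h4
    exact h5.trans (psi r (subRay r (P i))).primPart_dvd
  -- by Part 1, this primitive part is a constant, hence `g` is a unit
  have hm6 : ∀ i, psiInv r n.primPart ∣ subRay r (P i) := by
    intro i
    have h := map_dvd (psiInv r) (hmQ i)
    rwa [show psiInv r (psi r (subRay r (P i))) = subRay r (P i) from
      RingHom.congr_fun (comp6 r) (subRay r (P i))] at h
  obtain ⟨c, hc⟩ : ∃ c : ℚ, psiInv r n.primPart = C c :=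
    ⟨_, eqC_of_totalDegree_eq_zero (key1 s r P hcop h0 _ hm6)⟩
  have hm9 : n.primPart = Polynomial.C (C c) := by
    have h := congrArg (psi r) hc
    rwa [show psi r (psiInv r n.primPart) = n.primPart from
        RingHom.congr_fun (comp7 r) _,
      show psi r (C c) = Polynomial.C (C c) from by simp [psi]] at h
  have hCbg : Polynomial.C ((algebraMap (MvPolynomial (Fin r) ℚ) (Kfrac r))
      (b : MvPolynomial (Fin r) ℚ)) * g =
      Polynomial.C ((algebraMap (MvPolynomial (Fin r) ℚ) (Kfrac r)) (n.content * C c)) := by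
    rw [← hb']
    conv_lhs => rw [n.eq_C_content_mul_primPart, hm9]
    rw [map_mul, θC, θC, ← Polynomial.C_mul, ← map_mul]
  have hgunit : IsUnit g := by
    have hx0 : (algebraMap (MvPolynomial (Fin r) ℚ) (Kfrac r)) (n.content * C c) ≠ 0 := by
      intro h
      have h2 : Polynomial.C ((algebraMap (MvPolynomial (Fin r) ℚ) (Kfrac r))
          (b : MvPolynomial (Fin r) ℚ)) * g = 0 := by
        rw [hCbg, h, Polynomial.C_0]
      rcases mul_eq_zero.mp h2 with h' | h'
      · exact hbK (by simpa using congrArg (Polynomial.coeff · 0) h')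
      · exact hg0 h'
    have h2 : IsUnit (Polynomial.C ((algebraMap (MvPolynomial (Fin r) ℚ) (Kfrac r))
        (b : MvPolynomial (Fin r) ℚ)) * g) := by
      rw [hCbg]
      exact Polynomial.isUnit_C.mpr (isUnit_iff_ne_zero.mpr hx0)
    exact isUnit_of_mul_isUnit_right h2
  -- Bezout identity over `K[t]`
  have htop : I = ⊤ := by
    rw [hIg, Ideal.span_singleton_eq_top]
    exact hgunit
  have h1mem : (1 : Polynomial (Kfrac r)) ∈ I := by rw [htop]; trivial
  rw [hI] at h1mem
  obtain ⟨cc, hcc⟩ := (Submodule.mem_span_range_iff_exists_fun _).mp h1mem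
  -- clear denominators
  have hNb := fun i => IsLocalization.integerNormalization_map_to_map
    (nonZeroDivisors (MvPolynomial (Fin r) ℚ)) (cc i)
  choose bb hbb using hNb
  set G0 : MvPolynomial (Fin r) ℚ := ∏ i, (bb i : MvPolynomial (Fin r) ℚ) with hG0
  have hG0ne : G0 ≠ 0 := by
    rw [hG0]
    exact Finset.prod_ne_zero_iff.mpr fun i _ => nonZeroDivisors.coe_ne_zero (bb i)
  set V : Fin s → Polynomial (MvPolynomial (Fin r) ℚ) := fun i =>
    Polynomial.C (∏ j ∈ Finset.univ.erase i, (bb j : MvPolynomial (Fin r) ℚ)) *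
      IsLocalization.integerNormalization (nonZeroDivisors (MvPolynomial (Fin r) ℚ)) (cc i)
    with hV
  have hkey : (∑ i, V i * psi r (subRay r (P i))) = Polynomial.C G0 := by
    apply hθinj
    rw [map_sum]
    have hterm : ∀ i, theta r (V i * psi r (subRay r (P i))) =
        Polynomial.C ((algebraMap (MvPolynomial (Fin r) ℚ) (Kfrac r)) G0) *
          (cc i • theta r (psi r (subRay r (P i)))) := by
      intro i
      have e1 : theta r (IsLocalization.integerNormalization
            (nonZeroDivisors (MvPolynomial (Fin r) ℚ)) (cc i)) =
          Polynomial.C ((algebraMap (MvPolynomial (Fin r) ℚ) (Kfrac r))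
            (bb i : MvPolynomial (Fin r) ℚ)) * cc i := by
        show Polynomial.map _ _ = _
        rw [hbb i, Algebra.smul_def, Polynomial.algebraMap_apply]
      have e2 : Polynomial.C ((algebraMap (MvPolynomial (Fin r) ℚ)
            (Kfrac r)) (∏ j ∈ Finset.univ.erase i, (bb j : MvPolynomial (Fin r) ℚ))) *
          Polynomial.C ((algebraMap (MvPolynomial (Fin r) ℚ) (Kfrac r))
            (bb i : MvPolynomial (Fin r) ℚ)) =
          Polynomial.C ((algebraMap (MvPolynomial (Fin r) ℚ) (Kfrac r)) G0) := by
        rw [← Polynomial.C_mul, ← map_mul, Finset.prod_erase_mul _ _ (Finset.mem_univ i), ← hG0]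
      calc theta r (V i * psi r (subRay r (P i))) =
          (Polynomial.C ((algebraMap (MvPolynomial (Fin r) ℚ) (Kfrac r))
            (∏ j ∈ Finset.univ.erase i, (bb j : MvPolynomial (Fin r) ℚ))) *
            (Polynomial.C ((algebraMap (MvPolynomial (Fin r) ℚ) (Kfrac r))
              (bb i : MvPolynomial (Fin r) ℚ)) * cc i)) *
            theta r (psi r (subRay r (P i))) := by
            rw [map_mul, hV, map_mul, θC, e1]
        _ = Polynomial.C ((algebraMap (MvPolynomial (Fin r) ℚ) (Kfrac r)) G0) *
            (cc i • theta r (psi r (subRay r (P i)))) := by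
            rw [smul_eq_mul, ← e2]
            ring
    rw [Finset.sum_congr rfl (fun i _ => hterm i), ← Finset.mul_sum, hcc, mul_one, θC]
  -- conclusion
  refine ⟨G0, hG0ne, ?_⟩
  intro a ha D hDdvd
  have h1 := congrArg (eva r a) hkey
  rw [map_sum] at h1
  have hterm2 : ∀ i, eva r a (V i * psi r (subRay r (P i))) =
      eva r a (V i) * subRayAt r a (P i) := by
    intro i
    rw [map_mul]
    congr 1
    exact RingHom.congr_fun (comp8 r a) (P i)
  rw [Finset.sum_congr rfl (fun i _ => hterm2 i),
    show eva r a (Polynomial.C G0) = Polynomial.C (eval (fun j => ((a j : ℚ))) G0) from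
      Polynomial.map_C _] at h1
  have hdvd2 : D ∣ Polynomial.C (eval (fun j => ((a j : ℚ))) G0) := by
    rw [← h1]
    exact Finset.dvd_sum fun i _ => (hDdvd i).mul_left _
  have hCne : Polynomial.C (eval (fun j => ((a j : ℚ))) G0) ≠ (0 : Polynomial ℚ) :=
    fun h => ha (by simpa using congrArg (Polynomial.coeff · 0) h)
  have h2 := Polynomial.natDegree_le_of_dvd hdvd2 hCne
  simpa using h2
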